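/- Let a > 0 and let λ ∈ ℂ with dist(λ, Z_a) ≤ π/(2a), where Z_a = {2πk/a : k ∈ ℤ}. Let x_λ denote a nearest point of Z_a to λ. Then the sum over x ∈ Z_a of |Im λ|^2/|x - conj(λ)|^2 is bounded by |Im λ/(λ - x_λ)|^2 + 2·(a|Im λ|/(2π))^2 · Σ_{k≥1} 1/(k - 1/4)^2, and hence by a universal constant independent of λ and a. -/

import Mathlib

-- base series lemmas
lemma base_summable : Summable (fun k : ℕ => 1 / ((k:ℝ) + 1 - 1/4)^2) := by
  have h0 : Summable (fun n : ℕ => 1/((n:ℝ)+1)^2) := by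
    have := (summable_nat_add_iff 1).mpr (Real.summable_one_div_nat_pow.mpr one_lt_two)
    simpa using this
  have h1 : Summable (fun n : ℕ => (16:ℝ)/9 / ((n:ℝ)+1)^2) := by
    refine (h0.mul_left (16/9)).congr (fun n => ?_)
    ring
  refine Summable.of_nonneg_of_le (fun n => by positivity) (fun n => ?_) h1
  have hn : (0:ℝ) ≤ (n:ℝ) := Nat.cast_nonneg n
  have hx : (0:ℝ) < (n:ℝ) + 1 - 1/4 := by linarith
  have hy : (0:ℝ) < (n:ℝ) + 1 := by linarith
  rw [div_le_div_iff₀ (by positivity) (by positivity)]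
  nlinarith [sq_nonneg ((n:ℝ))]

lemma base_tsum_le : (∑' k : ℕ, 1 / ((k:ℝ) + 1 - 1/4)^2) ≤ 4 := by
  apply Real.tsum_le_of_sum_range_le (fun n => by positivity)
  intro n
  have key : ∀ i : ℕ, 1 / ((i:ℝ) + 1 - 1/4)^2 ≤
      (fun j : ℕ => 1/((j:ℝ)+1/4)) i - (fun j : ℕ => 1/((j:ℝ)+1/4)) (i+1) := by
    intro i
    have hi : (0:ℝ) ≤ (i:ℝ) := Nat.cast_nonneg i
    have h1 : (0:ℝ) < (i:ℝ)+1/4 := by linarith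
    have h2 : (0:ℝ) < ((i:ℕ)+1 : ℕ) + (1:ℝ)/4 := by push_cast; linarith
    simp only
    push_cast
    have h2' : (0:ℝ) < (i:ℝ)+1+1/4 := by linarith
    rw [div_sub_div _ _ h1.ne' h2'.ne', div_le_div_iff₀ (by nlinarith) (by positivity)]
    nlinarith
  calc ∑ i ∈ Finset.range n, 1 / ((i:ℝ) + 1 - 1/4)^2
      ≤ ∑ i ∈ Finset.range n, ((fun j : ℕ => 1/((j:ℝ)+1/4)) i - (fun j : ℕ => 1/((j:ℝ)+1/4)) (i+1)) :=
        Finset.sum_le_sum (fun i _ => key i)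
    _ = 1/(((0:ℕ):ℝ)+1/4) - 1/(((n:ℕ):ℝ)+1/4) := Finset.sum_range_sub' (fun j : ℕ => 1/((j:ℝ)+1/4)) n
    _ ≤ 4 := by
        have hn : (0:ℝ) ≤ (n:ℝ) := Nat.cast_nonneg n
        have : (0:ℝ) ≤ 1/((n:ℝ)+1/4) := by positivity
        push_cast
        norm_num
        linarith

/-- Let `a > 0` and `λ ∈ ℂ` with `dist(λ, Z_a) ≤ π/(2a)`, where `Z_a = {2πk/a : k ∈ ℤ}`,
and let `x₀` be a nearest point of `Z_a` to `λ`.  Then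
`Σ_{x ∈ Z_a} |Im λ|²/|x - conj λ|²` is bounded by
`|Im λ/(λ - x₀)|² + 2·(a|Im λ|/(2π))²·Σ_{k≥1} 1/(k - 1/4)²`, hence by a universal constant. -/
theorem stmt_3 :
    ∃ C : ℝ, 0 < C ∧ ∀ (a : ℝ) (z : ℂ) (x₀ : ℝ), 0 < a →
      (∃ k : ℤ, x₀ = 2*Real.pi*k/a) →
      (∀ k : ℤ, dist z ((x₀ : ℝ) : ℂ) ≤ dist z (((2*Real.pi*(k:ℝ)/a : ℝ)) : ℂ)) →
      dist z ((x₀ : ℝ) : ℂ) ≤ Real.pi/(2*a) →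
      ((∑' k : ℤ, |z.im|^2 / ‖((2*Real.pi*(k:ℝ)/a : ℝ) : ℂ) - (starRingEnd ℂ) z‖^2)
          ≤ ‖((z.im : ℝ) : ℂ) / (z - ((x₀ : ℝ) : ℂ))‖^2
            + 2 * (a * |z.im| / (2*Real.pi))^2 * (∑' k : ℕ, 1 / ((k:ℝ) + 1 - 1/4)^2)) ∧
      (∑' k : ℤ, |z.im|^2 / ‖((2*Real.pi*(k:ℝ)/a : ℝ) : ℂ) - (starRingEnd ℂ) z‖^2) ≤ C := by
  refine ⟨2, by norm_num, ?_⟩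
  intro a z x₀ ha hx₀mem hnear hclose
  obtain ⟨k₀, hk₀⟩ := hx₀mem
  have hπ := Real.pi_pos
  set S : ℝ := ∑' k : ℕ, 1 / ((k:ℝ) + 1 - 1/4)^2 with hS
  set c : ℝ := (a * |z.im| / (2*Real.pi))^2 with hc
  set F : ℤ → ℝ := fun k => |z.im|^2 / ‖((2*Real.pi*(k:ℝ)/a : ℝ) : ℂ) - (starRingEnd ℂ) z‖^2
    with hFdef
  set h : ℝ := 2*Real.pi/a with hh
  have hh0 : 0 < h := by positivity
  have hc0 : 0 ≤ c := sq_nonneg _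
  have hS0 : 0 ≤ S := tsum_nonneg (fun n => by positivity)
  have hS4 : S ≤ 4 := base_tsum_le
  -- norm / dist relation
  have hnormconj : ∀ x : ℝ, ‖((x : ℝ) : ℂ) - (starRingEnd ℂ) z‖ = dist z ((x:ℝ):ℂ) := by
    intro x
    have : ((x : ℝ) : ℂ) - (starRingEnd ℂ) z = (starRingEnd ℂ) (((x:ℝ):ℂ) - z) := by
      simp [map_sub, Complex.conj_ofReal]
    rw [this, RCLike.norm_conj, ← dist_eq_norm, dist_comm]
  -- |Im z| ≤ dist z x₀
  have him_le : |z.im| ≤ dist z ((x₀:ℝ):ℂ) := by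
    rw [dist_eq_norm]
    have : |z.im| = |(z - ((x₀:ℝ):ℂ)).im| := by simp
    rw [this]
    exact Complex.abs_im_le_norm _
  have hclose' : dist z ((x₀:ℝ):ℂ) ≤ h/4 := by
    have : Real.pi/(2*a) = h/4 := by rw [hh]; field_simp; ring
    linarith [hclose]
  -- definition of G, the majorant indexed by ℤ
  set G : ℤ → ℝ := fun m => if m = 0 then F k₀ else c / (|(m:ℝ)| - 1/4)^2 with hGdef
  have hGpos : HasSum (fun n : ℕ => G ((n:ℤ)+1)) (c * S) := by
    have h1 : HasSum (fun n : ℕ => c * (1 / ((n:ℝ) + 1 - 1/4)^2)) (c * S) :=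
      base_summable.hasSum.mul_left c
    convert h1 using 2 with n
    have hne : ((n:ℤ)+1) ≠ 0 := by positivity
    rw [hGdef]
    simp only [hne, if_false]
    push_cast
    rw [abs_of_nonneg (by positivity : (0:ℝ) ≤ (n:ℝ)+1), mul_one_div]
  have hGneg : HasSum (fun n : ℕ => G (-((n:ℤ)+1))) (c * S) := by
    have h1 : HasSum (fun n : ℕ => c * (1 / ((n:ℝ) + 1 - 1/4)^2)) (c * S) :=
      base_summable.hasSum.mul_left c
    convert h1 using 2 with n
    have hne : (-((n:ℤ)+1)) ≠ 0 := by
      have : ((n:ℤ)+1) ≠ 0 := by positivity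
      omega
    rw [hGdef]
    simp only [hne, if_false]
    push_cast
    rw [abs_neg, abs_of_nonneg (by positivity : (0:ℝ) ≤ (n:ℝ)+1), mul_one_div]
  have hGsum : HasSum G (c * S + F k₀ + c * S) := by
    have := HasSum.of_add_one_of_neg_add_one hGpos hGneg
    simpa [hGdef] using this
  -- pointwise comparison
  have hcomp : ∀ m : ℤ, F (k₀ + m) ≤ G m := by
    intro m
    rcases eq_or_ne m 0 with rfl | hm
    · simp [hGdef]
    · rw [hGdef]
      simp only [hm, if_false]
      have habs1 : (1:ℝ) ≤ |(m:ℝ)| := by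
        have := Int.one_le_abs hm
        calc (1:ℝ) = ((1:ℤ):ℝ) := by norm_num
          _ ≤ ((|m|:ℤ):ℝ) := by exact_mod_cast this
          _ = |(m:ℝ)| := by push_cast; ring
      set t : ℝ := |(m:ℝ)| - 1/4 with ht
      have ht0 : 0 < t := by rw [ht]; linarith
      -- lattice distance
      have hd : dist ((x₀:ℝ):ℂ) (((2*Real.pi*((k₀+m : ℤ):ℝ)/a : ℝ)):ℂ) = h * |(m:ℝ)| := by
        rw [Complex.isometry_ofReal.dist_eq, Real.dist_eq, hk₀]
        have : 2*Real.pi*(k₀:ℝ)/a - 2*Real.pi*((k₀+m : ℤ):ℝ)/a = h * (-(m:ℝ)) := by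
          rw [hh]; push_cast; field_simp; ring
        rw [this, abs_mul, abs_neg, abs_of_pos hh0]
      have htri : h * |(m:ℝ)| ≤ dist z ((x₀:ℝ):ℂ) + dist z (((2*Real.pi*((k₀+m:ℤ):ℝ)/a : ℝ)):ℂ) := by
        rw [← hd]
        calc dist ((x₀:ℝ):ℂ) (((2*Real.pi*((k₀+m:ℤ):ℝ)/a : ℝ)):ℂ)
            ≤ dist ((x₀:ℝ):ℂ) z + dist z (((2*Real.pi*((k₀+m:ℤ):ℝ)/a : ℝ)):ℂ) := dist_triangle _ _ _
          _ = dist z ((x₀:ℝ):ℂ) + dist z (((2*Real.pi*((k₀+m:ℤ):ℝ)/a : ℝ)):ℂ) := by rw [dist_comm]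
      have hlow : h * t ≤ dist z (((2*Real.pi*((k₀+m:ℤ):ℝ)/a : ℝ)):ℂ) := by
        have : h * t = h * |(m:ℝ)| - h/4 := by rw [ht]; ring
        linarith [hclose']
      have hht : 0 < h * t := mul_pos hh0 ht0
      have hstep1 : F (k₀ + m) ≤ |z.im|^2 / (h*t)^2 := by
        rw [hFdef]
        simp only
        rw [hnormconj]
        apply div_le_div_of_nonneg_left (sq_nonneg _) (by positivity)
        exact pow_le_pow_left₀ hht.le hlow 2
      have hstep2 : |z.im|^2 / (h*t)^2 = c / t^2 := by
        rw [hc, hh]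
        field_simp
      linarith [hstep1, hstep2.le, hstep2.ge]
  have hF0 : ∀ k, 0 ≤ F k := fun k => by rw [hFdef]; positivity
  have hsummF' : Summable (fun m : ℤ => F (k₀ + m)) :=
    Summable.of_nonneg_of_le (fun m => hF0 _) hcomp hGsum.summable
  have hre : (∑' m : ℤ, F (k₀ + m)) = ∑' k, F k := by
    simpa using Equiv.tsum_eq (Equiv.addLeft k₀) F
  have hle : (∑' k, F k) ≤ c * S + F k₀ + c * S := by
    rw [← hre, ← hGsum.tsum_eq]
    exact Summable.tsum_le_tsum hcomp hsummF' hGsum.summable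
  -- F k₀ equals the first RHS term
  have hFk₀ : F k₀ = ‖((z.im : ℝ) : ℂ) / (z - ((x₀:ℝ):ℂ))‖^2 := by
    rw [hFdef]
    simp only
    rw [← hk₀, hnormconj, norm_div, div_pow, Complex.norm_real, Real.norm_eq_abs, dist_eq_norm]
  have hFk₀le : F k₀ ≤ 1 := by
    rw [hFdef]
    simp only
    rw [← hk₀, hnormconj]
    apply div_le_one_of_le₀ _ (by positivity)
    nlinarith [him_le, dist_nonneg (x := z) (y := ((x₀:ℝ):ℂ)), abs_nonneg z.im]
  have hcle : c ≤ 1/16 := by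
    have h1 : |z.im| ≤ Real.pi/(2*a) := le_trans him_le hclose
    have h2 : a * |z.im| / (2*Real.pi) ≤ 1/4 := by
      rw [div_le_iff₀ (by positivity)]
      have h3 : a * |z.im| ≤ a * (Real.pi/(2*a)) := by
        exact mul_le_mul_of_nonneg_left h1 ha.le
      have h4 : a * (Real.pi/(2*a)) = Real.pi/2 := by field_simp
      nlinarith
    have h5 : (0:ℝ) ≤ a * |z.im| / (2*Real.pi) := by positivity
    rw [hc]
    nlinarith
  constructor
  · calc (∑' k, F k) ≤ c * S + F k₀ + c * S := hle
      _ = F k₀ + 2 * c * S := by ring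
      _ = ‖((z.im : ℝ) : ℂ) / (z - ((x₀:ℝ):ℂ))‖^2 + 2 * c * S := by rw [hFk₀]
  · have hcS : c * S ≤ 1/16 * 4 := mul_le_mul hcle hS4 hS0 (by norm_num)
    calc (∑' k, F k) ≤ c * S + F k₀ + c * S := hle
      _ ≤ 1/16 * 4 + 1 + 1/16 * 4 := by linarith
      _ ≤ 2 := by norm_num
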